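/- Let k ≥ 1, N = C(2k, k), and A a nonempty family of k-subsets of [2k] with |A| ≤ N/2. Then δ(A) := (|∇A| - |A|)/|A| ≥ (log 2 / k) · log₂(N / (2|A|)), where ∇A is the upper shadow of A in the (k+1)-subsets of [2k]. -/

import Mathlib

set_option maxHeartbeats 1000000

open Finset FinsetFamily Finset.Colex



noncomputable def rchoose (x : ℝ) (k : ℕ) : ℝ :=
  (∏ i ∈ Finset.range k, (x - i)) / (Nat.factorial k)

lemma rchoose_zero (x : ℝ) : rchoose x 0 = 1 := by simp [rchoose]

lemma rchoose_succ (x : ℝ) (k : ℕ) :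
    rchoose x (k + 1) = rchoose x k * (x - k) / (k + 1) := by
  rw [rchoose, rchoose, prod_range_succ, Nat.factorial_succ]
  push_cast
  rw [div_mul_eq_mul_div, div_div]
  rw [mul_comm ((k:ℝ) + 1)]

lemma rchoose_pascal (x : ℝ) (k : ℕ) :
    rchoose x (k + 1) = rchoose (x - 1) (k + 1) + rchoose (x - 1) k := by
  induction k with
  | zero => rw [rchoose_succ, rchoose_succ, rchoose_zero, rchoose_zero]; push_cast; ring
  | succ m ih =>
    rw [rchoose_succ x, rchoose_succ (x-1), ih, rchoose_succ (x-1)]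
    have h1 : ((m:ℝ)+1+1) ≠ 0 := by positivity
    field_simp
    push_cast
    ring

lemma rchoose_nonneg {x : ℝ} {k : ℕ} (h : (k : ℝ) - 1 ≤ x) : 0 ≤ rchoose x k := by
  apply div_nonneg _ (by positivity)
  apply Finset.prod_nonneg
  intro i hi
  rw [mem_range] at hi
  have : (i : ℝ) + 1 ≤ (k : ℝ) := by exact_mod_cast Nat.lt_iff_add_one_le.mp hi
  linarith

lemma prod_range_cast_sub (n k : ℕ) (h : k ≤ n) :
    ∏ i ∈ Finset.range k, ((n : ℝ) - i) = (n.descFactorial k : ℝ) := by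
  induction k with
  | zero => simp
  | succ m ih =>
    rw [prod_range_succ, ih (le_trans (Nat.le_succ m) h), Nat.descFactorial_succ]
    have hm : m ≤ n := le_trans (Nat.le_succ m) h
    push_cast [Nat.cast_sub hm]
    ring

lemma rchoose_nat (n k : ℕ) (h : k ≤ n) : rchoose (n : ℝ) k = (n.choose k : ℝ) := by
  rw [rchoose, prod_range_cast_sub n k h, Nat.descFactorial_eq_factorial_mul_choose]
  push_cast
  rw [mul_comm]
  field_simp

lemma rchoose_mono (k : ℕ) {x y : ℝ} (hx : (k : ℝ) - 1 ≤ x) (h : x ≤ y) :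
    rchoose x k ≤ rchoose y k := by
  apply div_le_div_of_nonneg_right _ (by positivity)
  · apply Finset.prod_le_prod
    · intro i hi
      rw [mem_range] at hi
      have : (i : ℝ) + 1 ≤ (k : ℝ) := by exact_mod_cast Nat.lt_iff_add_one_le.mp hi
      linarith
    · intro i _; linarith

lemma one_le_rchoose {x : ℝ} (k : ℕ) (h : (k : ℝ) ≤ x) : 1 ≤ rchoose x k := by
  have : rchoose (k : ℝ) k ≤ rchoose x k := rchoose_mono k (by linarith) h
  rwa [rchoose_nat k k le_rfl, Nat.choose_self, Nat.cast_one] at this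


lemma shadow_card_lower {B : Finset (Finset ℕ)} {S : Finset ℕ} (hS : S ∈ B) :
    S.card ≤ (∂ B).card := by
  have hsub : S.image S.erase ⊆ ∂ B := by
    intro t ht
    obtain ⟨a, ha, rfl⟩ := mem_image.1 ht
    exact mem_shadow_iff.2 ⟨S, hS, a, ha, rfl⟩
  calc S.card = (S.image S.erase).card := (card_image_of_injOn (erase_injOn S)).symm
    _ ≤ _ := card_le_card hsub

lemma frankl (M : ℕ) : ∀ (k : ℕ) (B : Finset (Finset ℕ)) (e : ℕ), k + B.card ≤ M →
    1 ≤ k → B.Nonempty → (∀ S ∈ B, S.card = k) →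
    (∀ S ∈ B, ∀ v ∈ S, e ≤ v) →
    (∀ S ∈ B, ∀ j ∈ S, ∀ i : ℕ, e ≤ i → i < j → i ∉ S → insert i (S.erase j) ∈ B) →
    ∀ x : ℝ, (k : ℝ) - 1 ≤ x → rchoose x k ≤ (B.card : ℝ) →
    rchoose x (k - 1) ≤ ((∂ B).card : ℝ) := by
  induction M using Nat.strong_induction_on with
  | _ M IH =>
  intro k B e hM hk hne hsized hG hLC x hx hcard
  obtain ⟨S₀, hS₀⟩ := hne
  -- case k = 1
  rcases Nat.lt_or_ge k 2 with hk2 | hk2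
  · have hk1 : k = 1 := by omega
    subst hk1
    simp only [Nat.sub_self, rchoose_zero]
    have h1 : 1 ≤ (∂ B).card := by
      have := shadow_card_lower hS₀
      rw [hsized S₀ hS₀] at this
      omega
    exact_mod_cast h1
  -- setup
  set B1 : Finset (Finset ℕ) := (B.filter (fun S => e ∈ S)).image (fun S => S.erase e) with hB1def
  set B0 : Finset (Finset ℕ) := B.filter (fun S => e ∉ S) with hB0def
  have hmem1 : ∀ T : Finset ℕ, T ∈ B1 ↔ (e ∉ T ∧ insert e T ∈ B) := by
    intro T
    constructor
    · rintro hT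
      obtain ⟨S, hS, rfl⟩ := mem_image.1 hT
      rw [mem_filter] at hS
      exact ⟨notMem_erase _ _, by rw [insert_erase hS.2]; exact hS.1⟩
    · rintro ⟨he, hins⟩
      exact mem_image.2 ⟨insert e T, mem_filter.2 ⟨hins, mem_insert_self _ _⟩,
        by rw [erase_insert he]⟩
  have hB1card : B1.card = (B.filter (fun S => e ∈ S)).card := by
    apply card_image_of_injOn
    intro s hs t ht hst
    simp only at hst
    rw [coe_filter, Set.mem_setOf_eq] at hs ht
    rw [← insert_erase hs.2, ← insert_erase ht.2, hst]
  have hsplit : B1.card + B0.card = B.card := by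
    rw [hB1card]
    exact card_filter_add_card_filter_not _
  have hB1shadow : B1 ⊆ ∂ B := by
    intro T hT
    rw [hmem1] at hT
    refine mem_shadow_iff.2 ⟨insert e T, hT.2, e, mem_insert_self _ _, erase_insert hT.1⟩
  have hB1free : ∀ T ∈ B1, e ∉ T := fun T hT => ((hmem1 T).1 hT).1
  have hB1sized : ∀ T ∈ B1, T.card = k - 1 := by
    intro T hT
    rw [hmem1] at hT
    have := hsized _ hT.2
    rw [card_insert_of_notMem hT.1] at this
    omega
  have hshfree : ∀ U ∈ ∂ B1, e ∉ U := by
    intro U hU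
    obtain ⟨T, hT, a, ha, rfl⟩ := mem_shadow_iff.1 hU
    exact fun h => hB1free T hT (mem_of_mem_erase h)
  have himg : (∂ B1).image (insert e) ⊆ ∂ B := by
    intro U hU
    obtain ⟨V, hV, rfl⟩ := mem_image.1 hU
    obtain ⟨T, hT, a, ha, rfl⟩ := mem_shadow_iff.1 hV
    have hae : a ≠ e := fun h => hB1free T hT (h ▸ ha)
    refine mem_shadow_iff.2 ⟨insert e T, ((hmem1 T).1 hT).2, a, mem_insert_of_mem ha, ?_⟩
    rw [erase_insert_of_ne hae.symm]
  have hshadow_ge : B1.card + (∂ B1).card ≤ (∂ B).card := by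
    have hdisj : Disjoint B1 ((∂ B1).image (insert e)) := by
      rw [disjoint_left]
      intro T hT hT'
      obtain ⟨V, _, rfl⟩ := mem_image.1 hT'
      exact hB1free _ hT (mem_insert_self _ _)
    have hinj : ((∂ B1).image (insert e)).card = (∂ B1).card := by
      apply card_image_of_injOn
      intro s hs t ht hst
      rw [mem_coe] at hs ht
      rw [← erase_insert (hshfree s hs), ← erase_insert (hshfree t ht), hst]
    calc B1.card + (∂ B1).card = (B1 ∪ (∂ B1).image (insert e)).card := by
          rw [card_union_of_disjoint hdisj, hinj]
      _ ≤ (∂ B).card := card_le_card (union_subset hB1shadow himg)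
  have hB0shadow : ∂ B0 ⊆ B1 := by
    intro U hU
    obtain ⟨S, hS, j, hj, rfl⟩ := mem_shadow_iff.1 hU
    rw [mem_filter] at hS
    have hej : e < j := lt_of_le_of_ne (hG S hS.1 j hj) (fun h => hS.2 (h ▸ hj))
    have : insert e (S.erase j) ∈ B := hLC S hS.1 j hj e le_rfl hej hS.2
    exact (hmem1 _).2 ⟨fun h => hS.2 (mem_of_mem_erase h), this⟩
  have hB1ne : B1.Nonempty := by
    by_cases heS : e ∈ S₀
    · exact ⟨S₀.erase e, mem_image.2 ⟨S₀, mem_filter.2 ⟨hS₀, heS⟩, rfl⟩⟩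
    · have hS₀0 : S₀ ∈ B0 := mem_filter.2 ⟨hS₀, heS⟩
      have : S₀.Nonempty := by
        rw [← card_pos, hsized S₀ hS₀]; omega
      obtain ⟨j, hj⟩ := this
      exact ⟨S₀.erase j, hB0shadow (mem_shadow_iff.2 ⟨S₀, hS₀0, j, hj, rfl⟩)⟩
  -- case x ≤ k
  rcases le_or_gt x (k : ℝ) with hxk | hxk
  · have h1 : rchoose x (k-1) ≤ rchoose (k : ℝ) (k-1) := by
      apply rchoose_mono (k-1) _ hxk
      have : ((k-1 : ℕ) : ℝ) ≤ (k : ℝ) := by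
        exact_mod_cast Nat.sub_le k 1
      linarith
    have h2 : (k : ℕ).choose (k-1) = k := by
      rw [← Nat.choose_symm (Nat.sub_le k 1), Nat.sub_sub_self hk, Nat.choose_one_right]
    have h3 : (k : ℝ) ≤ ((∂ B).card : ℝ) := by
      have := shadow_card_lower hS₀
      rw [hsized S₀ hS₀] at this
      exact_mod_cast this
    rw [rchoose_nat k (k-1) (Nat.sub_le k 1), h2] at h1
    linarith
  -- main case
  have hk1 : k - 1 = (k - 2) + 1 := by omega
  have hkk : k = (k - 1) + 1 := by omega
  rcases le_or_gt (rchoose (x-1) (k-1)) (B1.card : ℝ) with hcase | hcase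
  · -- Case 1
    have hmlt : (k - 1) + B1.card < M := by
      have : B1.card ≤ B.card := by omega
      omega
    have hIH := IH ((k-1) + B1.card) hmlt (k-1) B1 (e+1) le_rfl (by omega) hB1ne hB1sized
      (by
        intro T hT v hv
        have h1 := hG _ ((hmem1 T).1 hT).2 v (mem_insert_of_mem hv)
        have h2 : v ≠ e := fun h => hB1free T hT (h ▸ hv)
        omega)
      (by
        intro T hT j hj i hi hij hiT
        rw [hmem1] at hT ⊢
        have hje : j ≠ e := fun h => hB1free T ((hmem1 T).2 hT) (h ▸ hj)
        have hie : i ≠ e := by omega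
        have h1 : insert i ((insert e T).erase j) ∈ B :=
          hLC _ hT.2 j (mem_insert_of_mem hj) i (by omega) hij
            (by simp [hie, hT.1, hiT])
        rw [erase_insert_of_ne hje.symm] at h1
        rw [Finset.insert_comm] at h1
        exact ⟨by simp [Ne.symm hie, hT.1], h1⟩)
      (x - 1) (by
        have h5 : ((k-1 : ℕ) : ℝ) ≤ (k : ℝ) := by exact_mod_cast Nat.sub_le k 1
        linarith) (by exact_mod_cast hcase)
    have hpas : rchoose x (k-1) = rchoose (x-1) (k-1) + rchoose (x-1) (k-2) := by
      conv_lhs => rw [hk1]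
      rw [rchoose_pascal, ← hk1]
    have h7 : k - 1 - 1 = k - 2 := by omega
    rw [h7] at hIH
    have h8 : ((B1.card : ℝ)) + ((∂ B1).card : ℝ) ≤ ((∂ B).card : ℝ) := by
      exact_mod_cast hshadow_ge
    linarith
  · -- Case 2
    exfalso
    have hpas : rchoose x k = rchoose (x-1) k + rchoose (x-1) (k-1) := by
      conv_lhs => rw [hkk]
      rw [rchoose_pascal, ← hkk]
    have hB0big : rchoose (x-1) k < (B0.card : ℝ) := by
      have hcards : (B1.card : ℝ) + (B0.card : ℝ) = (B.card : ℝ) := by exact_mod_cast hsplit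
      linarith
    have hB0ne : B0.Nonempty := by
      rw [← card_pos]
      by_contra h
      push_neg at h
      have h0 : B0.card = 0 := by omega
      rw [h0] at hB0big
      have := rchoose_nonneg (x := x - 1) (k := k) (by linarith)
      push_cast at hB0big
      linarith
    have hmlt : k + B0.card < M := by
      have h1 : 1 ≤ B1.card := card_pos.2 hB1ne
      omega
    have hIH := IH (k + B0.card) hmlt k B0 (e+1) le_rfl hk hB0ne
      (fun S hS => hsized S (mem_filter.1 hS).1)
      (by
        intro S hS v hv
        rw [mem_filter] at hS
        have h1 := hG S hS.1 v hv
        have h2 : v ≠ e := fun h => hS.2 (h ▸ hv)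
        omega)
      (by
        intro S hS j hj i hi hij hiS
        rw [mem_filter] at hS ⊢
        refine ⟨hLC S hS.1 j hj i (by omega) hij hiS, ?_⟩
        simp only [mem_insert, mem_erase]
        push_neg
        exact ⟨by omega, fun _ => hS.2⟩)
      (x - 1) (by linarith) (le_of_lt hB0big)
    have := card_le_card hB0shadow
    have hfin : rchoose (x-1) (k-1) ≤ (B1.card : ℝ) := by
      calc rchoose (x-1) (k-1) ≤ ((∂ B0).card : ℝ) := hIH
        _ ≤ (B1.card : ℝ) := by exact_mod_cast this
    linarith


lemma exists_lowerset {β : Type*} [LinearOrder β] (P : Finset β) :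
    ∀ a : ℕ, a ≤ P.card → ∃ Q ⊆ P, Q.card = a ∧ ∀ x ∈ Q, ∀ y ∈ P, y ≤ x → y ∈ Q := by
  classical
  intro a
  induction a with
  | zero => intro _; exact ⟨∅, empty_subset _, card_empty, by simp⟩
  | succ m ih =>
    intro ha
    obtain ⟨Q, hQP, hQcard, hQlow⟩ := ih (le_trans (Nat.le_succ m) ha)
    have hne : (P \ Q).Nonempty := by
      rw [← card_pos, card_sdiff_of_subset hQP]
      omega
    set μ := (P \ Q).min' hne with hμ
    have hμmem : μ ∈ P \ Q := min'_mem _ _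
    rw [mem_sdiff] at hμmem
    refine ⟨insert μ Q, ?_, ?_, ?_⟩
    · exact insert_subset hμmem.1 hQP
    · rw [card_insert_of_notMem hμmem.2, hQcard]
    · intro x hx y hy hyx
      rcases mem_insert.1 hx with rfl | hxQ
      · by_cases hyQ : y ∈ Q
        · exact mem_insert_of_mem hyQ
        · have : μ ≤ y := min'_le _ _ (mem_sdiff.2 ⟨hy, hyQ⟩)
          have : y = μ := le_antisymm hyx this
          exact this ▸ mem_insert_self _ _
      · exact mem_insert_of_mem (hQlow x hxQ y hy hyx)

lemma exists_isInitSeg (n k a : ℕ)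
    (ha : a ≤ (powersetCard k (univ : Finset (Fin n))).card) :
    ∃ 𝒞 : Finset (Finset (Fin n)), Finset.Colex.IsInitSeg 𝒞 k ∧ 𝒞.card = a := by
  classical
  set P := (powersetCard k (univ : Finset (Fin n))).image toColex with hP
  have hPcard : P.card = (powersetCard k (univ : Finset (Fin n))).card :=
    card_image_of_injective _ toColex.injective
  obtain ⟨Q, hQP, hQcard, hQlow⟩ := exists_lowerset P a (by omega)
  refine ⟨Q.image ofColex, ?_, ?_⟩
  · constructor
    · intro S hS
      obtain ⟨q, hq, rfl⟩ := mem_image.1 hS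
      have := hQP hq
      rw [hP, mem_image] at this
      obtain ⟨T, hT, rfl⟩ := this
      exact (mem_powersetCard.1 hT).2
    · rintro S T hS ⟨hlt, hTcard⟩
      obtain ⟨q, hq, rfl⟩ := mem_image.1 hS
      have hTQ : toColex T ∈ Q := by
        apply hQlow _ hq
        · rw [hP, mem_image]
          exact ⟨T, mem_powersetCard.2 ⟨subset_univ _, hTcard⟩, rfl⟩
        · exact le_of_lt hlt
      exact mem_image.2 ⟨toColex T, hTQ, rfl⟩
  · rw [card_image_of_injective _ ofColex.injective, hQcard]

lemma initseg_swap {n k : ℕ} {𝒞 : Finset (Finset (Fin n))} (h : Finset.Colex.IsInitSeg 𝒞 k) :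
    ∀ S ∈ 𝒞, ∀ j ∈ S, ∀ i : Fin n, i < j → i ∉ S → insert i (S.erase j) ∈ 𝒞 := by
  intro S hS j hj i hij hiS
  have hie : i ∉ S.erase j := fun h' => hiS (mem_of_mem_erase h')
  have hje : j ∉ S.erase j := notMem_erase _ _
  have hlt : toColex (insert i (S.erase j)) < toColex S := by
    conv_rhs => rw [← insert_erase hj]
    exact (Colex.insert_lt_insert hie hje).2 hij
  have hcard : (insert i (S.erase j)).card = k := by
    rw [card_insert_of_notMem hie, card_erase_of_mem hj, h.1 hS]
    have : 1 ≤ k := by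
      rw [← h.1 hS]
      exact card_pos.2 ⟨j, hj⟩
    omega
  exact h.2 hS ⟨hlt, hcard⟩

lemma rKK {n k : ℕ} (hk : 1 ≤ k) (B : Finset (Finset (Fin n)))
    (hB : (B : Set (Finset (Fin n))).Sized k) (hne : B.Nonempty)
    (x : ℝ) (hx : (k : ℝ) - 1 ≤ x) (hcard : rchoose x k ≤ (B.card : ℝ)) :
    rchoose x (k - 1) ≤ ((∂ B).card : ℝ) := by
  have hsub : B ⊆ powersetCard k (univ : Finset (Fin n)) := fun S hS =>
    mem_powersetCard.2 ⟨subset_univ _, hB hS⟩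
  obtain ⟨𝒞, h𝒞, h𝒞card⟩ := exists_isInitSeg n k B.card (card_le_card hsub)
  have hKK : (∂ 𝒞).card ≤ (∂ B).card := by
    have h2 := Finset.kruskal_katona hB (le_of_eq h𝒞card) h𝒞
    convert h2 using 3
  -- transfer 𝒞 to ℕ
  set v : Fin n ↪ ℕ := Fin.valEmbedding with hv
  set D : Finset (Finset ℕ) := 𝒞.image (fun S => S.map v) with hD
  have hDcard : D.card = 𝒞.card :=
    card_image_of_injective _ (Finset.map_injective v)
  have hDne : D.Nonempty := by
    rw [← card_pos, hDcard, h𝒞card]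
    exact card_pos.2 hne
  have hDsized : ∀ T ∈ D, T.card = k := by
    intro T hT
    obtain ⟨S, hS, rfl⟩ := mem_image.1 hT
    rw [card_map]
    exact h𝒞.1 hS
  have hDLC : ∀ S ∈ D, ∀ j ∈ S, ∀ i : ℕ, 0 ≤ i → i < j → i ∉ S →
      insert i (S.erase j) ∈ D := by
    intro T hT j hj i _ hij hiT
    obtain ⟨S, hS, rfl⟩ := mem_image.1 hT
    obtain ⟨jj, hjj, rfl⟩ := mem_map.1 hj
    have hjlt : (jj : ℕ) < n := jj.isLt
    set ii : Fin n := ⟨i, lt_trans hij hjlt⟩ with hii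
    have hiiS : ii ∉ S := fun h' => hiT (mem_map.2 ⟨ii, h', rfl⟩)
    have hiijj : ii < jj := hij
    have hmem : insert ii (S.erase jj) ∈ 𝒞 := initseg_swap h𝒞 S hS jj hjj ii hiijj hiiS
    have heq : insert i ((S.map v).erase (v jj)) = (insert ii (S.erase jj)).map v := by
      rw [Finset.map_insert, ← Finset.map_erase]
      rfl
    rw [heq]
    exact mem_image.2 ⟨_, hmem, rfl⟩
  have hDshadow : (∂ D).card ≤ (∂ 𝒞).card := by
    have hsub2 : ∂ D ⊆ (∂ 𝒞).image (fun S => S.map v) := by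
      intro U hU
      obtain ⟨T, hT, a, ha, rfl⟩ := mem_shadow_iff.1 hU
      obtain ⟨S, hS, rfl⟩ := mem_image.1 hT
      obtain ⟨aa, haa, rfl⟩ := mem_map.1 ha
      refine mem_image.2 ⟨S.erase aa, mem_shadow_iff.2 ⟨S, hS, aa, haa, rfl⟩, ?_⟩
      rw [Finset.map_erase]
    exact le_trans (card_le_card hsub2) (card_image_le)
  have hfr := frankl (k + D.card) k D 0 le_rfl hk hDne hDsized
    (fun S _ v _ => Nat.zero_le v) hDLC x hx
    (by rw [hDcard, h𝒞card]; exact hcard)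
  calc rchoose x (k-1) ≤ ((∂ D).card : ℝ) := hfr
    _ ≤ ((∂ 𝒞).card : ℝ) := by exact_mod_cast hDshadow
    _ ≤ ((∂ B).card : ℝ) := by exact_mod_cast hKK


/-- Isoperimetric consequence of Kruskal–Katona: for a nonempty family `A` of `k`-subsets
of `[2k]` with `|A| ≤ N/2` (where `N = C(2k,k)`), the upper shadow satisfies
`(|∇A| - |A|)/|A| ≥ (log 2 / k) · log₂(N / (2|A|))`. -/
theorem stmt_6 (k : ℕ) (hk : 1 ≤ k) (A : Finset (Finset (Fin (2 * k))))
    (hA : ∀ s ∈ A, s.card = k) (hne : A.Nonempty)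
    (hle : (A.card : ℝ) ≤ ((2 * k).choose k : ℝ) / 2) :
    (Real.log 2 / k) * Real.logb 2 (((2 * k).choose k : ℝ) / (2 * A.card)) ≤
      ((A.upShadow.card : ℝ) - A.card) / A.card := by
  classical
  have hkR : (0:ℝ) < k := by exact_mod_cast hk
  have ha0 : (0:ℝ) < A.card := by exact_mod_cast card_pos.2 hne
  have ha1 : (1:ℝ) ≤ A.card := by exact_mod_cast card_pos.2 hne
  -- N = 2 * C(2k-1, k)
  have h2N : (2 * k).choose k = 2 * (2 * k - 1).choose k := by
    obtain ⟨m, rfl⟩ : ∃ m, k = m + 1 := ⟨k - 1, by omega⟩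
    have h1 : 2 * (m + 1) = (2 * m + 1) + 1 := by ring
    rw [h1]
    have h2 : (2 * m + 1 + 1).choose (m + 1)
        = (2 * m + 1).choose m + (2 * m + 1).choose (m + 1) :=
      Nat.choose_succ_succ' (2 * m + 1) m
    have h3 : (2 * m + 1).choose m = (2 * m + 1).choose (m + 1) := by
      have := Nat.choose_symm (n := 2 * m + 1) (k := m + 1) (by omega)
      have h4 : 2 * m + 1 - (m + 1) = m := by omega
      rw [h4] at this
      exact this
    have h5 : 2 * m + 1 + 1 - 1 = 2 * m + 1 := by omega
    rw [h5, h2, h3]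
    ring
  have hNC : (((2*k).choose k : ℕ) : ℝ) = 2 * (((2*k-1).choose k : ℕ) : ℝ) := by
    exact_mod_cast congrArg (Nat.cast (R := ℝ)) h2N
  have hCpos : (0:ℝ) < (((2*k-1).choose k : ℕ) : ℝ) := by
    have : 0 < (2*k-1).choose k := Nat.choose_pos (by omega)
    exact_mod_cast this
  have haC : (A.card : ℝ) ≤ (((2*k-1).choose k : ℕ) : ℝ) := by
    rw [hNC] at hle; linarith
  -- the complement family
  set B : Finset (Finset (Fin (2 * k))) := Aᶜˢ with hB
  have hBsized : (B : Set (Finset (Fin (2 * k)))).Sized k := by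
    intro s hs
    rw [mem_coe, hB, mem_compls] at hs
    have h1 := hA _ hs
    have h2 : sᶜ.card = Fintype.card (Fin (2*k)) - s.card := card_compl s
    rw [Fintype.card_fin] at h2
    have h3 : s.card ≤ 2 * k := by
      simpa using card_le_card (subset_univ s)
    omega
  have hBne : B.Nonempty := by
    obtain ⟨s, hs⟩ := hne
    exact ⟨sᶜ, compl_mem_compls hs⟩
  have hBcard : B.card = A.card := card_compls A
  have hshadow : ((∂ B).card : ℕ) = A.upShadow.card := by
    rw [hB, shadow_compls, card_compls]
  -- cast of 2k-1
  have hc21 : (((2*k-1 : ℕ)) : ℝ) = 2 * (k:ℝ) - 1 := by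
    have : (1:ℕ) ≤ 2 * k := by omega
    push_cast [this]
    ring
  -- IVT to find x with rchoose x k = A.card
  have hcont : Continuous fun x : ℝ => rchoose x k := by
    unfold rchoose
    exact (continuous_finset_prod _ (fun i _ => by continuity)).div_const _
  have hklt : (k : ℝ) ≤ 2 * (k:ℝ) - 1 := by
    have : (1:ℝ) ≤ (k:ℝ) := by exact_mod_cast hk
    linarith
  have hIVT := intermediate_value_Icc hklt (hcont.continuousOn
    (s := Set.Icc (k:ℝ) (2*(k:ℝ)-1)))
  have hmem : (A.card : ℝ) ∈ Set.Icc (rchoose (k:ℝ) k) (rchoose (2*(k:ℝ)-1) k) := by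
    constructor
    · rw [rchoose_nat k k le_rfl, Nat.choose_self]
      exact_mod_cast ha1
    · rw [← hc21, rchoose_nat (2*k-1) k (by omega)]
      exact haC
  obtain ⟨x, hxmem, hfx0⟩ := hIVT hmem
  obtain ⟨hx1, hx2⟩ := hxmem
  have hfx : rchoose x k = (A.card : ℝ) := hfx0
  clear hfx0 hIVT hmem hcont
  -- apply KK
  have hKK := rKK hk B hBsized hBne x (by linarith) (by rw [hfx, hBcard])
  -- t
  have hden : (0:ℝ) < x - k + 1 := by linarith
  set t : ℝ := (k:ℝ) / (x - k + 1) with ht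
  have ht1 : (1:ℝ) ≤ t := by
    rw [ht, le_div_iff₀ hden]
    linarith
  have ht0 : (0:ℝ) < t := by linarith
  -- rchoose x (k-1) = t * A.card
  have hkey : rchoose x (k-1) = t * A.card := by
    have hsucc := rchoose_succ x (k-1)
    have hkk : (k-1) + 1 = k := by omega
    rw [hkk] at hsucc
    have hcast : ((k-1 : ℕ) : ℝ) = (k:ℝ) - 1 := by
      have : (1:ℕ) ≤ k := hk
      push_cast [this]
      ring
    rw [hcast, hfx] at hsucc
    rw [ht]
    have hx0 : x - ((k:ℝ) - 1) = x - k + 1 := by ring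
    rw [hx0] at hsucc
    rw [show (k:ℝ) - 1 + 1 = k by ring, eq_div_iff hkR.ne'] at hsucc
    field_simp at hsucc ⊢
    linarith [hsucc]
  have hD : t * (A.card : ℝ) ≤ (A.upShadow.card : ℝ) := by
    rw [← hkey, ← hshadow]
    exact_mod_cast hKK
  -- product bound : C(2k-1,k) ≤ t^k * A.card
  have hprodle : ∏ i ∈ Finset.range k, (2*(k:ℝ)-1 - i) ≤
      ∏ i ∈ Finset.range k, (t * (x - i)) := by
    apply Finset.prod_le_prod
    · intro i hi
      rw [mem_range] at hi
      have hi' : (i:ℝ) + 1 ≤ (k:ℝ) := by exact_mod_cast hi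
      linarith
    · intro i hi
      rw [mem_range] at hi
      have hi' : (i:ℝ) + 1 ≤ (k:ℝ) := by exact_mod_cast hi
      rw [ht, div_mul_eq_mul_div, le_div_iff₀ hden]
      nlinarith [mul_nonneg (by linarith : (0:ℝ) ≤ 2*(k:ℝ)-1-x)
        (by linarith : (0:ℝ) ≤ (k:ℝ)-1-(i:ℝ))]
  have hstep : rchoose (2*(k:ℝ)-1) k ≤ t^k * rchoose x k := by
    rw [rchoose, rchoose, ← mul_div_assoc]
    apply div_le_div_of_nonneg_right _ (by positivity)
    calc ∏ i ∈ Finset.range k, (2*(k:ℝ)-1 - i)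
        ≤ ∏ i ∈ Finset.range k, (t * (x - i)) := hprodle
      _ = t^k * ∏ i ∈ Finset.range k, (x - i) := by
          rw [Finset.prod_mul_distrib, Finset.prod_const, card_range]
  have hCa : (((2*k-1).choose k : ℕ) : ℝ) ≤ t^k * A.card := by
    rw [hfx] at hstep
    rw [← hc21, rchoose_nat (2*k-1) k (by omega)] at hstep
    exact hstep
  -- final chain
  set z : ℝ := ((2 * k).choose k : ℝ) / (2 * A.card) with hz
  have hNa : z ≤ t^k := by
    rw [hz, hNC, div_le_iff₀ (by positivity : (0:ℝ) < 2 * A.card)]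
    calc 2 * (((2*k-1).choose k : ℕ) : ℝ) ≤ 2 * (t^k * A.card) := by linarith
      _ = t^k * (2 * A.card) := by ring
  have hzpos : (0:ℝ) < z := by
    apply div_pos _ (by positivity)
    have : 0 < (2*k).choose k := Nat.choose_pos (by omega)
    exact_mod_cast this
  have hlog2 : Real.log 2 ≠ 0 := ne_of_gt (Real.log_pos one_lt_two)
  have hLHS : Real.log 2 / k * Real.logb 2 z = Real.log z / k := by
    rw [Real.logb]
    field_simp
  rw [hLHS]
  have hlogz : Real.log z ≤ (k:ℝ) * Real.log t := by
    calc Real.log z ≤ Real.log (t^k) := Real.log_le_log hzpos hNa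
      _ = (k:ℝ) * Real.log t := by rw [Real.log_pow]
  have hlogt : Real.log t ≤ t - 1 := Real.log_le_sub_one_of_pos ht0
  have h9 : Real.log z / k ≤ t - 1 := by
    rw [div_le_iff₀ hkR]
    calc Real.log z ≤ (k:ℝ) * Real.log t := hlogz
      _ ≤ (k:ℝ) * (t - 1) := mul_le_mul_of_nonneg_left hlogt (le_of_lt hkR)
      _ = (t - 1) * k := by ring
  have h10 : t - 1 ≤ ((A.upShadow.card : ℝ) - A.card) / A.card := by
    rw [le_div_iff₀ ha0]
    have : (t - 1) * (A.card : ℝ) = t * A.card - A.card := by ring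
    rw [this]
    linarith [hD]
  exact le_trans h9 h10
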